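/- Let F be a field, t ≥ 2 and 1 ≤ r ≤ s integers. Then the length (F-vector space dimension) of the quotient ring F[y_1,...,y_s]/((y_1,...,y_r)^{t-1} + (y_2,...,y_s)^t) equals (s-r+1) * binomial(s+t-2, t-2). -/

import Mathlib

open Finset

namespace LQP

/-- partial sum over indices `< k` -/
def pS (s k : ℕ) (g : Fin s → ℕ) : ℕ := ∑ i ∈ univ.filter (fun i : Fin s => (i : ℕ) < k), g i

/-- sum over indices `≥ 1` -/
def qS (s : ℕ) (g : Fin s → ℕ) : ℕ := ∑ i ∈ univ.filter (fun i : Fin s => 1 ≤ (i : ℕ)), g i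

/-- sum over indices `> k` -/
def tS (s k : ℕ) (g : Fin s → ℕ) : ℕ := ∑ i ∈ univ.filter (fun i : Fin s => k < (i : ℕ)), g i

lemma pS_mono {s k k' : ℕ} (h : k ≤ k') (g : Fin s → ℕ) : pS s k g ≤ pS s k' g := by
  apply Finset.sum_le_sum_of_subset
  intro i hi
  simp only [mem_filter, mem_univ, true_and] at hi ⊢
  omega

lemma le_pS {s k : ℕ} (g : Fin s → ℕ) (i : Fin s) (h : (i : ℕ) < k) : g i ≤ pS s k g := by
  apply Finset.single_le_sum (fun _ _ => Nat.zero_le _)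
  simp [h]

lemma le_qS {s : ℕ} (g : Fin s → ℕ) (i : Fin s) (h : 1 ≤ (i : ℕ)) : g i ≤ qS s g := by
  apply Finset.single_le_sum (fun _ _ => Nat.zero_le _)
  simp [h]

lemma pS_self {s : ℕ} (g : Fin s → ℕ) : pS s s g = ∑ i, g i := by
  unfold pS
  rw [Finset.filter_true_of_mem (fun i _ => i.is_lt)]

lemma qS_le_sum {s : ℕ} (g : Fin s → ℕ) : qS s g ≤ ∑ i, g i := by
  apply Finset.sum_le_sum_of_subset
  intro i hi; simp

lemma key_split {s k : ℕ} (hks : k < s) (g : Fin s → ℕ) :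
    ∑ i, g i = pS s k g + g ⟨k, hks⟩ + tS s k g := by
  rw [← Finset.sum_filter_add_sum_filter_not univ (fun i : Fin s => (i : ℕ) < k) g]
  have h1 : univ.filter (fun i : Fin s => ¬ (i : ℕ) < k)
      = insert (⟨k, hks⟩ : Fin s) (univ.filter (fun i : Fin s => k < (i : ℕ))) := by
    ext i
    simp only [mem_filter, mem_univ, true_and, mem_insert, Fin.ext_iff]
    omega
  rw [h1, Finset.sum_insert (by simp)]
  unfold pS tS
  ring

lemma key_split0 {s : ℕ} [NeZero s] (g : Fin s → ℕ) :
    ∑ i, g i = g 0 + qS s g := by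
  rw [← Finset.sum_filter_add_sum_filter_not univ (fun i : Fin s => 1 ≤ (i : ℕ)) g]
  have h1 : univ.filter (fun i : Fin s => ¬ 1 ≤ (i : ℕ)) = {(0 : Fin s)} := by
    ext i
    simp only [mem_filter, mem_univ, true_and, mem_singleton, Fin.ext_iff, Fin.val_zero]
    omega
  rw [h1, Finset.sum_singleton]
  unfold qS
  ring

lemma pS_succ {s k : ℕ} (hks : k < s) (g : Fin s → ℕ) :
    pS s (k+1) g = pS s k g + g ⟨k, hks⟩ := by
  unfold pS
  have h1 : univ.filter (fun i : Fin s => (i : ℕ) < k + 1)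
      = insert (⟨k, hks⟩ : Fin s) (univ.filter (fun i : Fin s => (i : ℕ) < k)) := by
    ext i
    simp only [mem_filter, mem_univ, true_and, mem_insert, Fin.ext_iff]
    omega
  rw [h1, Finset.sum_insert (by simp)]
  ring

lemma sum_eq_of_eq_on {s : ℕ} (u : Finset (Fin s)) (g h : Fin s → ℕ) (i0 : Fin s)
    (h0 : i0 ∈ u) (hagree : ∀ i ∈ u, i ≠ i0 → h i = g i) :
    ∑ i ∈ u, h i + g i0 = ∑ i ∈ u, g i + h i0 := by
  rw [← Finset.add_sum_erase u h h0, ← Finset.add_sum_erase u g h0]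
  have heq : ∑ i ∈ u.erase i0, h i = ∑ i ∈ u.erase i0, g i :=
    Finset.sum_congr rfl fun i hi =>
      hagree i (Finset.mem_of_mem_erase hi) (Finset.ne_of_mem_erase hi)
  omega

/-- stars and bars: number of `g : Fin m → ℕ` with `∑ g ≤ d` (inside a big enough box). -/
lemma card_sum_le (m d b : ℕ) (hb : d < b) :
    ((Fintype.piFinset fun _ : Fin m => Finset.range b).filter fun g => ∑ i, g i ≤ d).card
      = (m + d).choose d := by
  have e1 : {x // x ∈ ((Fintype.piFinset fun _ : Fin m => Finset.range b).filter
      fun g => ∑ i, g i ≤ d)} ≃ {g : Fin m → ℕ // ∑ i, g i ≤ d} := by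
    apply Equiv.subtypeEquivRight
    intro g
    simp only [Finset.mem_filter, Fintype.mem_piFinset, Finset.mem_range]
    constructor
    · exact fun h => h.2
    · intro h
      refine ⟨fun i => lt_of_le_of_lt (le_trans ?_ h) hb, h⟩
      exact Finset.single_le_sum (fun _ _ => Nat.zero_le _) (mem_univ i)
  have e2 : {g : Fin m → ℕ // ∑ i, g i ≤ d} ≃ {h : Fin (m+1) → ℕ // ∑ i, h i = d} :=
    { toFun := fun g => ⟨Fin.snoc g.1 (d - ∑ i, g.1 i), by
        rw [Fin.sum_univ_castSucc]
        simp only [Fin.snoc_castSucc, Fin.snoc_last]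
        have := g.2; omega⟩
      invFun := fun h => ⟨fun i => h.1 i.castSucc, by
        show ∑ i : Fin m, h.1 i.castSucc ≤ d
        have := h.2; rw [Fin.sum_univ_castSucc] at this; omega⟩
      left_inv := fun g => by
        apply Subtype.ext; funext i; simp [Fin.snoc_castSucc]
      right_inv := fun h => by
        apply Subtype.ext; funext i
        refine Fin.lastCases ?_ ?_ i
        · simp only [Fin.snoc_last]
          have := h.2; rw [Fin.sum_univ_castSucc] at this; omega
        · intro j; simp [Fin.snoc_castSucc] }
  rw [← Nat.card_eq_finsetCard, Nat.card_congr (e1.trans e2),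
    Nat.card_congr (Sym.equivNatSumOfFintype (Fin (m+1)) d).symm,
    Nat.card_eq_fintype_card, Sym.card_sym_eq_multichoose, Fintype.card_fin, Nat.multichoose_eq]
  congr 1
  omega


def Phi (s t k : ℕ) (z κ : Fin s) (a : Fin s → ℕ) : Fin s → ℕ := fun i =>
  if i = κ then a κ - (t - 1 - pS s k a)
  else if i = z then a z - ((a κ - (t - 1 - pS s k a)) + tS s k a)
  else a i

def Psi (s t k : ℕ) (z κ : Fin s) (c : Fin s → ℕ) : Fin s → ℕ := fun i =>
  if i = κ then c κ + (t - 1 - (pS s k c + c κ + tS s k c))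
  else if i = z then c z + c κ + tS s k c
  else c i

lemma card_D (t s k : ℕ) (ht : 2 ≤ t) (hk1 : 1 ≤ k) (hks : k < s) :
    ((Fintype.piFinset fun _ : Fin s => Finset.range t).filter
        fun g => (pS s k g ≤ t-2 ∧ qS s g ≤ t-1) ∧ ¬ pS s (k+1) g ≤ t-2).card
      = ((Fintype.piFinset fun _ : Fin s => Finset.range t).filter
        fun g => ∑ i, g i ≤ t-2).card := by
  haveI : NeZero s := ⟨by omega⟩
  set κ : Fin s := ⟨k, hks⟩ with hκdef
  have hz0 : ((0 : Fin s) : ℕ) = 0 := Fin.val_zero s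
  have h0κ : (0 : Fin s) ≠ κ := by
    intro h; rw [Fin.ext_iff, hz0] at h; simp only [hκdef] at h; omega
  have h0k : ((0:Fin s) : ℕ) < k := by omega
  have h0mem : (0 : Fin s) ∈ univ.filter (fun i : Fin s => (i : ℕ) < k) := by
    simp only [mem_filter, mem_univ, true_and]; omega
  -- facts about functions agreeing off {0, κ}
  have agree_facts : ∀ (a h : Fin s → ℕ), (∀ i, i ≠ 0 → i ≠ κ → h i = a i) →
      pS s k h + a 0 = pS s k a + h 0 ∧ tS s k h = tS s k a := by
    intro a h hag
    constructor
    · apply sum_eq_of_eq_on _ a h 0 h0mem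
      intro i hi hne
      apply hag i hne
      intro hiκ
      rw [mem_filter] at hi
      rw [hiκ] at hi
      simp only [hκdef] at hi
      omega
    · apply Finset.sum_congr rfl
      intro i hi
      rw [mem_filter] at hi
      apply hag
      · intro h0; rw [h0, hz0] at hi; omega
      · intro hiκ; rw [hiκ] at hi; simp only [hκdef] at hi; omega
  have hPhi_agree : ∀ a : Fin s → ℕ, ∀ i, i ≠ 0 → i ≠ κ → Phi s t k 0 κ a i = a i := by
    intro a i h1 h2; simp only [Phi, if_neg h2, if_neg h1]
  have hPsi_agree : ∀ c : Fin s → ℕ, ∀ i, i ≠ 0 → i ≠ κ → Psi s t k 0 κ c i = c i := by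
    intro c i h1 h2; simp only [Psi, if_neg h2, if_neg h1]
  have hPhiκ : ∀ a : Fin s → ℕ, Phi s t k 0 κ a κ = a κ - (t - 1 - pS s k a) := by
    intro a; simp [Phi]
  have hPhi0 : ∀ a : Fin s → ℕ,
      Phi s t k 0 κ a 0 = a 0 - ((a κ - (t - 1 - pS s k a)) + tS s k a) := by
    intro a; simp [Phi, h0κ]
  have hPsiκ : ∀ c : Fin s → ℕ,
      Psi s t k 0 κ c κ = c κ + (t - 1 - (pS s k c + c κ + tS s k c)) := by
    intro c; simp [Psi]
  have hPsi0 : ∀ c : Fin s → ℕ, Psi s t k 0 κ c 0 = c 0 + c κ + tS s k c := by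
    intro c; simp [Psi, h0κ]
  apply Finset.card_bij' (fun a _ => Phi s t k 0 κ a) (fun c _ => Psi s t k 0 κ c)
  · -- forward maps into target
    intro a ha
    rw [mem_filter] at ha
    obtain ⟨-, ⟨hP, hQ⟩, hPk1⟩ := ha
    rw [pS_succ hks] at hPk1
    obtain ⟨hpeq, hteq⟩ := agree_facts a _ (hPhi_agree a)
    have hkey := key_split hks (Phi s t k 0 κ a)
    have hkeya := key_split hks a
    have hkey0a := key_split0 a
    have ha0 : a 0 ≤ pS s k a := le_pS a 0 h0k
    have hv1 := hPhiκ a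
    have hv2 := hPhi0 a
    have hsum : ∑ i, Phi s t k 0 κ a i ≤ t - 2 := by
      rw [hκdef] at *
      omega
    rw [mem_filter]
    refine ⟨?_, hsum⟩
    rw [Fintype.mem_piFinset]
    intro i
    rw [Finset.mem_range]
    have := Finset.single_le_sum (f := Phi s t k 0 κ a) (fun _ _ => Nat.zero_le _) (mem_univ i)
    omega
  · -- backward maps into source
    intro c hc
    rw [mem_filter] at hc
    obtain ⟨-, hsum⟩ := hc
    obtain ⟨hpeq, hteq⟩ := agree_facts c _ (hPsi_agree c)
    have hkey := key_split hks (Psi s t k 0 κ c)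
    have hkeyc := key_split hks c
    have hkey0 := key_split0 (Psi s t k 0 κ c)
    have hc0 : c 0 ≤ pS s k c := le_pS c 0 h0k
    have hPs := hPsiκ c
    have hPs0 := hPsi0 c
    have h1 : pS s k (Psi s t k 0 κ c) ≤ t - 2 := by rw [hκdef] at *; omega
    have h2 : ¬ pS s (k+1) (Psi s t k 0 κ c) ≤ t - 2 := by
      rw [pS_succ hks]
      rw [hκdef] at *; omega
    have h3 : qS s (Psi s t k 0 κ c) ≤ t - 1 := by rw [hκdef] at *; omega
    rw [mem_filter]
    refine ⟨?_, ⟨h1, h3⟩, h2⟩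
    rw [Fintype.mem_piFinset]
    intro i
    rw [Finset.mem_range]
    by_cases hiκ : i = κ
    · rw [hiκ, hPs]; rw [hκdef] at *; omega
    · by_cases hi0 : i = 0
      · rw [hi0, hPs0]
        have h4 : c 0 + c κ + tS s k c ≤ ∑ i, c i := by rw [hκdef] at *; omega
        omega
      · rw [hPsi_agree c i hi0 hiκ]
        have := Finset.single_le_sum (f := c) (fun _ _ => Nat.zero_le _) (mem_univ i)
        omega
  · -- left inverse
    intro a ha
    rw [mem_filter] at ha
    obtain ⟨-, ⟨hP, hQ⟩, hPk1⟩ := ha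
    rw [pS_succ hks] at hPk1
    obtain ⟨hpeq, hteq⟩ := agree_facts a _ (hPhi_agree a)
    have hkeya := key_split hks a
    have hkey0a := key_split0 a
    have ha0 : a 0 ≤ pS s k a := le_pS a 0 h0k
    have hv1 := hPhiκ a
    have hv2 := hPhi0 a
    funext i
    by_cases hiκ : i = κ
    · rw [hiκ, hPsiκ (Phi s t k 0 κ a)]
      rw [hκdef] at *; omega
    · by_cases hi0 : i = 0
      · rw [hi0, hPsi0 (Phi s t k 0 κ a)]
        rw [hκdef] at *; omega
      · rw [hPsi_agree _ i hi0 hiκ, hPhi_agree a i hi0 hiκ]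
  · -- right inverse
    intro c hc
    rw [mem_filter] at hc
    obtain ⟨-, hsum⟩ := hc
    obtain ⟨hpeq, hteq⟩ := agree_facts c _ (hPsi_agree c)
    have hkeyc := key_split hks c
    have hkey := key_split hks (Psi s t k 0 κ c)
    have hc0 : c 0 ≤ pS s k c := le_pS c 0 h0k
    have hPs := hPsiκ c
    have hPs0 := hPsi0 c
    funext i
    by_cases hiκ : i = κ
    · rw [hiκ, hPhiκ (Psi s t k 0 κ c)]
      rw [hκdef] at *; omega
    · by_cases hi0 : i = 0
      · rw [hi0, hPhi0 (Psi s t k 0 κ c)]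
        rw [hκdef] at *; omega
      · rw [hPhi_agree _ i hi0 hiκ, hPsi_agree c i hi0 hiκ]

lemma countN (t s : ℕ) (ht : 2 ≤ t) :
    ∀ j k, 1 ≤ k → k ≤ s → s - k = j →
    ((Fintype.piFinset fun _ : Fin s => Finset.range t).filter
        fun g => pS s k g ≤ t-2 ∧ qS s g ≤ t-1).card
      = (s - k + 1) * (s + t - 2).choose (t-2) := by
  intro j
  induction j with
  | zero =>
    intro k hk1 hks hj
    have hks' : k = s := by omega
    subst hks'
    have hcong : ∀ g ∈ (Fintype.piFinset fun _ : Fin k => Finset.range t),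
        (pS k k g ≤ t-2 ∧ qS k g ≤ t-1) ↔ (∑ i, g i ≤ t - 2) := by
      intro g _
      rw [pS_self]
      constructor
      · exact fun h => h.1
      · intro h
        exact ⟨h, le_trans (le_trans (qS_le_sum g) h) (by omega)⟩
    rw [Finset.filter_congr hcong, card_sum_le k (t-2) t (by omega)]
    have h1 : k - k + 1 = 1 := by omega
    have h2 : k + (t-2) = k + t - 2 := by omega
    rw [h1, h2, one_mul]
  | succ j ih =>
    intro k hk1 hks hj
    have hks' : k < s := by omega
    have hsplit := Finset.card_filter_add_card_filter_not
      (s := (Fintype.piFinset fun _ : Fin s => Finset.range t).filter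
        fun g => pS s k g ≤ t-2 ∧ qS s g ≤ t-1)
      (p := fun g => pS s (k+1) g ≤ t-2)
    rw [Finset.filter_filter, Finset.filter_filter] at hsplit
    have hfirst : ((Fintype.piFinset fun _ : Fin s => Finset.range t).filter
        fun g => (pS s k g ≤ t-2 ∧ qS s g ≤ t-1) ∧ pS s (k+1) g ≤ t-2)
        = ((Fintype.piFinset fun _ : Fin s => Finset.range t).filter
        fun g => pS s (k+1) g ≤ t-2 ∧ qS s g ≤ t-1) := by
      apply Finset.filter_congr
      intro g _
      constructor
      · exact fun h => ⟨h.2, h.1.2⟩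
      · exact fun h => ⟨⟨le_trans (pS_mono (by omega) g) h.1, h.2⟩, h.1⟩
    have harith : s + (t - 2) = s + t - 2 := by omega
    have hih := ih (k+1) (by omega) (by omega) (by omega)
    have h2 : s - (k+1) + 1 = s - k := by omega
    have h4 : (s - k + 1) * (s + t - 2).choose (t-2)
        = (s - k) * (s + t - 2).choose (t-2) + (s + t - 2).choose (t-2) := by
      rw [Nat.succ_mul]
    have hrest := card_sum_le s (t-2) t (by omega)
    rw [harith] at hrest
    have hD := card_D t s k ht hk1 hks'
    rw [hfirst, hih, hD, hrest, h2] at hsplit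
    rw [h4, ← hsplit]

open MvPolynomial in
/-- the ideal of polynomials all of whose monomials have `π`-degree at least `n` -/
def degIdeal (s : ℕ) (F : Type*) [Field F] (π : Fin s → Prop) [DecidablePred π] (n : ℕ) :
    Ideal (MvPolynomial (Fin s) F) where
  carrier := {f | ∀ a ∈ f.support, n ≤ ∑ i ∈ univ.filter π, a i}
  zero_mem' := by intro a ha; simp at ha
  add_mem' := by
    intro x y hx hy a ha
    rcases Finset.mem_union.mp (MvPolynomial.support_add ha) with h | h
    exacts [hx a h, hy a h]
  smul_mem' := by
    intro c x hx a ha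
    rw [smul_eq_mul] at ha
    obtain ⟨b1, hb1, b2, hb2, rfl⟩ := Finset.mem_add.mp (MvPolynomial.support_mul c x ha)
    calc n ≤ ∑ i ∈ univ.filter π, b2 i := hx b2 hb2
    _ ≤ ∑ i ∈ univ.filter π, (b1 + b2) i := Finset.sum_le_sum (fun i _ => by simp)

open MvPolynomial in
lemma mem_degIdeal {s : ℕ} {F : Type*} [Field F] {π : Fin s → Prop} [DecidablePred π] {n : ℕ}
    {f : MvPolynomial (Fin s) F} :
    f ∈ degIdeal s F π n ↔ ∀ a ∈ f.support, n ≤ ∑ i ∈ univ.filter π, a i := Iff.rfl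

open MvPolynomial in
lemma span_pow_le (s : ℕ) (F : Type*) [Field F] (π : Fin s → Prop) [DecidablePred π] (n : ℕ) :
    (Ideal.span {p : MvPolynomial (Fin s) F | ∃ i, π i ∧ p = X i}) ^ n ≤ degIdeal s F π n := by
  induction n with
  | zero =>
    intro f _
    rw [mem_degIdeal]
    exact fun a _ => Nat.zero_le _
  | succ n ih =>
    rw [pow_succ]
    refine le_trans (Ideal.mul_mono (L := degIdeal s F π 1) ih ?_) ?_
    · rw [Ideal.span_le]
      rintro p ⟨i, hi, rfl⟩
      rw [SetLike.mem_coe, mem_degIdeal]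
      intro a ha
      rw [MvPolynomial.support_X, Finset.mem_singleton] at ha
      subst ha
      calc 1 = (Finsupp.single i 1 : Fin s →₀ ℕ) i := (Finsupp.single_eq_same).symm
      _ ≤ ∑ j ∈ univ.filter π, (Finsupp.single i 1 : Fin s →₀ ℕ) j :=
        Finset.single_le_sum (fun _ _ => Nat.zero_le _) (by simp [hi])
    · rw [Ideal.mul_le]
      intro f hf g hg
      rw [mem_degIdeal]
      intro a ha
      obtain ⟨b1, hb1, b2, hb2, rfl⟩ := Finset.mem_add.mp (MvPolynomial.support_mul f g ha)
      have h1 := (mem_degIdeal.mp hf) b1 hb1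
      have h2 := (mem_degIdeal.mp hg) b2 hb2
      have h3 : ∑ i ∈ univ.filter π, (b1 + b2) i
          = ∑ i ∈ univ.filter π, b1 i + ∑ i ∈ univ.filter π, b2 i := by
        rw [← Finset.sum_add_distrib]
        exact Finset.sum_congr rfl fun i _ => Finsupp.add_apply b1 b2 i
      omega

lemma prod_pow_mem {R : Type*} [CommRing R] (J : Ideal R) {ι : Type*}
    (g : ι → R) (e : ι → ℕ) :
    ∀ u : Finset ι, (∀ i ∈ u, g i ∈ J) → (∏ i ∈ u, g i ^ e i) ∈ J ^ (∑ i ∈ u, e i) := by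
  classical
  intro u
  induction u using Finset.induction_on with
  | empty =>
    intro _
    rw [Finset.prod_empty, Finset.sum_empty, pow_zero, Ideal.one_eq_top]
    exact Submodule.mem_top
  | @insert a u ha ih =>
    intro h
    rw [Finset.prod_insert ha, Finset.sum_insert ha, pow_add]
    exact Ideal.mul_mem_mul (Ideal.pow_mem_pow (h _ (Finset.mem_insert_self a u)) _)
      (ih fun i hi => h i (Finset.mem_insert_of_mem hi))

open MvPolynomial in
lemma monomial_mem_span_pow {s : ℕ} {F : Type*} [Field F] (π : Fin s → Prop) [DecidablePred π]
    (t' : ℕ) (a : Fin s →₀ ℕ) (h : t' ≤ ∑ i ∈ univ.filter π, a i) :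
    monomial a (1:F) ∈ (Ideal.span {p : MvPolynomial (Fin s) F | ∃ i, π i ∧ p = X i}) ^ t' := by
  set b : Fin s →₀ ℕ := a.filter π with hb
  have hbi : ∀ i, b i = if π i then a i else 0 := fun i => Finsupp.filter_apply π a i
  have hba : b + (a - b) = a := by
    ext i
    rw [Finsupp.add_apply, Finsupp.tsub_apply, hbi i]
    split_ifs <;> omega
  have hmono : monomial a (1:F) = monomial b 1 * monomial (a-b) 1 := by
    rw [MvPolynomial.monomial_mul, hba, one_mul]
  have hsupp : b.support ⊆ univ.filter π := by
    intro i hi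
    rw [hb, Finsupp.support_filter, mem_filter] at hi
    simp [hi.2]
  have hsum : ∑ i ∈ univ.filter π, a i = ∑ i ∈ b.support, b i := by
    rw [Finset.sum_congr rfl (fun i hi => ?_)]
    · exact (Finset.sum_subset hsupp (fun i _ hi => Finsupp.notMem_support_iff.mp hi)).symm
    · rw [hbi i, if_pos (mem_filter.mp hi).2]
  have hprod : monomial b (1:F) = ∏ i ∈ b.support, X i ^ b i := by
    rw [MvPolynomial.monomial_eq, map_one, one_mul]
    rfl
  have hmem : monomial b (1:F) ∈
      (Ideal.span {p : MvPolynomial (Fin s) F | ∃ i, π i ∧ p = X i}) ^ (∑ i ∈ b.support, b i) := by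
    rw [hprod]
    apply prod_pow_mem
    intro i hi
    apply Ideal.subset_span
    exact ⟨i, (mem_filter.mp (hsupp hi)).2, rfl⟩
  rw [hmono]
  apply Ideal.mul_mem_right
  exact Ideal.pow_le_pow_right (le_trans h (le_of_eq hsum)) hmem

end LQP

open MvPolynomial LQP Finset

/-- Let `F` be a field, `t ≥ 2` and `1 ≤ r ≤ s`. Then the `F`-vector space dimension of
`F[y_1,...,y_s]/((y_1,...,y_r)^{t-1} + (y_2,...,y_s)^t)` equals
`(s-r+1) * binomial(s+t-2, t-2)`. -/
theorem length_quotient_powers (F : Type*) [Field F] (t r s : ℕ)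
    (ht : 2 ≤ t) (hr : 1 ≤ r) (hrs : r ≤ s) :
    Module.finrank F
      (MvPolynomial (Fin s) F ⧸
        ((Ideal.span {p : MvPolynomial (Fin s) F | ∃ i : Fin s, (i : ℕ) < r ∧ p = X i}) ^ (t - 1) +
         (Ideal.span {p : MvPolynomial (Fin s) F | ∃ i : Fin s, 1 ≤ (i : ℕ) ∧ p = X i}) ^ t)) =
      (s - r + 1) * Nat.choose (s + t - 2) (t - 2) := by
  haveI : NeZero s := ⟨by omega⟩
  set J : Ideal (MvPolynomial (Fin s) F) :=
    Ideal.span {p : MvPolynomial (Fin s) F | ∃ i : Fin s, (i : ℕ) < r ∧ p = X i} with hJ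
  set K : Ideal (MvPolynomial (Fin s) F) :=
    Ideal.span {p : MvPolynomial (Fin s) F | ∃ i : Fin s, 1 ≤ (i : ℕ) ∧ p = X i} with hK
  set I : Ideal (MvPolynomial (Fin s) F) := J ^ (t-1) + K ^ t with hIdef
  -- the two degree conditions
  have h0r : ((0 : Fin s) : ℕ) < r := by rw [Fin.val_zero]; omega
  -- membership in I forces high degree
  have hI_le : ∀ f ∈ I, ∀ a ∈ f.support,
      ¬ (pS s r ⇑a ≤ t-2 ∧ qS s ⇑a ≤ t-1) := by
    intro f hf a ha
    rw [hIdef, Ideal.add_eq_sup] at hf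
    obtain ⟨g, hg, h, hh, rfl⟩ := Submodule.mem_sup.mp hf
    rintro ⟨hc1, hc2⟩
    rcases Finset.mem_union.mp (MvPolynomial.support_add ha) with hc | hc
    · have h1 := mem_degIdeal.mp
        (span_pow_le s F (fun i : Fin s => (i : ℕ) < r) (t-1) hg) a hc
      have h2 : pS s r ⇑a = ∑ i ∈ univ.filter (fun i : Fin s => (i : ℕ) < r), a i := rfl
      omega
    · have h1 := mem_degIdeal.mp
        (span_pow_le s F (fun i : Fin s => 1 ≤ (i : ℕ)) t hh) a hc
      have h2 : qS s ⇑a = ∑ i ∈ univ.filter (fun i : Fin s => 1 ≤ (i : ℕ)), a i := rfl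
      omega
  -- monomials of high degree belong to I
  have hmono_mem : ∀ a : Fin s →₀ ℕ,
      ¬ (pS s r ⇑a ≤ t-2 ∧ qS s ⇑a ≤ t-1) → monomial a (1:F) ∈ I := by
    intro a hcond
    have h2 : pS s r ⇑a = ∑ i ∈ univ.filter (fun i : Fin s => (i : ℕ) < r), a i := rfl
    have h3 : qS s ⇑a = ∑ i ∈ univ.filter (fun i : Fin s => 1 ≤ (i : ℕ)), a i := rfl
    rw [not_and_or] at hcond
    rcases hcond with hc | hc
    · have : t - 1 ≤ ∑ i ∈ univ.filter (fun i : Fin s => (i : ℕ) < r), a i := by omega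
      have hm := monomial_mem_span_pow (F := F) (fun i : Fin s => (i : ℕ) < r) (t-1) a this
      rw [hIdef, Ideal.add_eq_sup]
      exact Submodule.mem_sup_left hm
    · have : t ≤ ∑ i ∈ univ.filter (fun i : Fin s => 1 ≤ (i : ℕ)), a i := by omega
      have hm := monomial_mem_span_pow (F := F) (fun i : Fin s => 1 ≤ (i : ℕ)) t a this
      rw [hIdef, Ideal.add_eq_sup]
      exact Submodule.mem_sup_right hm
  -- the finset of standard exponents
  set SFin : Finset (Fin s →₀ ℕ) :=
    ((Fintype.piFinset fun _ : Fin s => Finset.range t).filter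
      (fun g => pS s r g ≤ t-2 ∧ qS s g ≤ t-1)).map
      ⟨Finsupp.equivFunOnFinite.symm, (Finsupp.equivFunOnFinite.symm).injective⟩ with hSFin
  have hmemS : ∀ a : Fin s →₀ ℕ, a ∈ SFin ↔ (pS s r ⇑a ≤ t-2 ∧ qS s ⇑a ≤ t-1) := by
    intro a
    rw [hSFin, Finset.mem_map]
    constructor
    · rintro ⟨g, hg, hga⟩
      rw [Finset.mem_filter] at hg
      have : ⇑a = g := by
        rw [← hga]; rfl
      rw [this]
      exact hg.2
    · intro hcond
      refine ⟨⇑a, ?_, ?_⟩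
      · rw [Finset.mem_filter]
        refine ⟨?_, hcond⟩
        rw [Fintype.mem_piFinset]
        intro i
        rw [Finset.mem_range]
        by_cases h1 : 1 ≤ (i : ℕ)
        · have := le_qS (⇑a) i h1; omega
        · have hival : (i : ℕ) < r := by omega
          have := le_pS (⇑a) i hival; omega
      · exact Finsupp.equivFunOnFinite.symm_apply_apply a
  -- the linear map to the quotient
  set mkL : MvPolynomial (Fin s) F →ₗ[F] (MvPolynomial (Fin s) F ⧸ I) :=
    (Ideal.Quotient.mkₐ F I).toLinearMap with hmkL
  have hmkL_eq : ∀ x, mkL x = Ideal.Quotient.mk I x := fun _ => rfl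
  set v : ↥SFin → (MvPolynomial (Fin s) F ⧸ I) := fun a => mkL (monomial a.1 1) with hv
  -- spanning
  have hspan : ⊤ ≤ Submodule.span F (Set.range v) := by
    rintro x -
    obtain ⟨f, rfl⟩ := Ideal.Quotient.mk_surjective x
    rw [← hmkL_eq]
    have hrepr : mkL f = ∑ a ∈ f.support, coeff a f • mkL (monomial a 1) := by
      conv_lhs => rw [MvPolynomial.as_sum f]
      rw [map_sum]
      refine Finset.sum_congr rfl fun a _ => ?_
      rw [← map_smul, MvPolynomial.smul_monomial, smul_eq_mul, mul_one]
    rw [hrepr]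
    apply Submodule.sum_mem
    intro a _
    by_cases hcond : pS s r ⇑a ≤ t-2 ∧ qS s ⇑a ≤ t-1
    · apply Submodule.smul_mem
      apply Submodule.subset_span
      exact ⟨⟨a, (hmemS a).mpr hcond⟩, rfl⟩
    · have : mkL (monomial a 1) = 0 := by
        rw [hmkL_eq, Ideal.Quotient.eq_zero_iff_mem]
        exact hmono_mem a hcond
      rw [this, smul_zero]
      exact Submodule.zero_mem _
  -- linear independence
  have hind : LinearIndependent F v := by
    rw [Fintype.linearIndependent_iff]
    intro g hg a₀
    set f : MvPolynomial (Fin s) F := ∑ a : ↥SFin, g a • monomial a.1 1 with hf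
    have hfI : f ∈ I := by
      rw [← Ideal.Quotient.eq_zero_iff_mem, ← hmkL_eq, hf, map_sum]
      simp_rw [map_smul]
      exact hg
    by_contra hga
    have hcoeff : coeff a₀.1 f = g a₀ := by
      rw [hf, MvPolynomial.coeff_sum]
      rw [Finset.sum_eq_single a₀]
      · rw [MvPolynomial.coeff_smul, MvPolynomial.coeff_monomial, if_pos rfl,
          smul_eq_mul, mul_one]
      · intro b _ hb
        rw [MvPolynomial.coeff_smul, MvPolynomial.coeff_monomial,
          if_neg (fun h => hb (Subtype.ext h)), smul_zero]
      · intro h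
        exact absurd (Finset.mem_univ a₀) h
    have hsupp : a₀.1 ∈ f.support := by
      rw [MvPolynomial.mem_support_iff, hcoeff]
      exact hga
    exact (hI_le f hfI a₀.1 hsupp) ((hmemS a₀.1).mp a₀.2)
  let b : Module.Basis ↥SFin F (MvPolynomial (Fin s) F ⧸ I) := Module.Basis.mk hind hspan
  rw [Module.finrank_eq_card_basis b, Fintype.card_coe, hSFin, Finset.card_map]
  exact countN t s ht (s - r) r hr hrs rfl
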